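/- Let V be a 4-dimensional real inner product space with nondegenerate metric g, pseudo-orthonormal basis e₁,...,e₄ with εᵢ = g(eᵢ,eᵢ), and ρ ∈ V with g(ρ,ρ) = -1, ω(X) = g(X,ρ). Suppose F is an endomorphism with F² = -id and g(FX,FY) = g(X,Y), and suppose ω(FY)g(X,FZ) - ω(Y)g(X,Z) + ω(FZ)g(X,FY) - ω(Z)g(X,Y) = 0 for all X,Y,Z ∈ V. Then ω(Y) = 0 for all Y, contradicting ω(ρ) = g(ρ,ρ) = -1; hence no such configuration exists. -/

import Mathlib

/-- The final contraction argument for weakly Ricci symmetric perfect fluid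
Kähler space-times: the displayed identity forces `ω = 0`, contradicting
`ω(ρ) = g(ρ,ρ) = -1`; hence no such configuration exists. -/
theorem weakly_ricci_symmetric_final_contradiction
    {V : Type*} [AddCommGroup V] [Module ℝ V]
    (g : V →ₗ[ℝ] V →ₗ[ℝ] ℝ)
    (hgsymm : ∀ X Y, g X Y = g Y X)
    (hgnd : ∀ X, (∀ Y, g X Y = 0) → X = 0)
    (b : Module.Basis (Fin 4) ℝ V) (ε : Fin 4 → ℝ)
    (hε : ∀ i, ε i = 1 ∨ ε i = -1)
    (hortho : ∀ i j, g (b i) (b j) = if i = j then ε i else 0)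
    (ρ : V) (hρ : g ρ ρ = -1)
    (F : V →ₗ[ℝ] V)
    (hF2 : ∀ X, F (F X) = -X)
    (hFg : ∀ X Y, g (F X) (F Y) = g X Y)
    (hkey : ∀ X Y Z, g (F Y) ρ * g X (F Z) - g Y ρ * g X Z
        + g (F Z) ρ * g X (F Y) - g Z ρ * g X Y = 0) :
    False := by
  set c : ℝ := g (F ρ) ρ with hc
  -- From the key identity with Y = Z = ρ:  c • F ρ + ρ is g-orthogonal to everything
  have hW : (c • F ρ + ρ : V) = 0 := by
    apply hgnd
    intro X
    have h := hkey X ρ ρ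
    rw [hρ] at h
    simp only [map_add, map_smul, LinearMap.add_apply, LinearMap.smul_apply, smul_eq_mul]
    rw [hgsymm (F ρ) X, hgsymm ρ X]
    linarith
  -- Apply F to get F ρ = c • ρ
  have hFρ : F ρ = c • ρ := by
    have := congrArg F hW
    simp only [map_add, map_smul, hF2, map_zero, smul_neg] at this
    have : F ρ = c • ρ := by
      have h' : -(c • ρ) + F ρ = 0 := this
      linear_combination (norm := abel) h'
    exact this
  -- Substitute back: (c^2 + 1) • ρ = 0, so ρ = 0
  have hρ0 : ρ = 0 := by
    rw [hFρ, smul_smul] at hW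
    have h2 : (c * c + 1) • ρ = 0 := by
      rw [add_smul, one_smul]; exact hW
    have hne : (c * c + 1 : ℝ) ≠ 0 := by nlinarith [sq_nonneg c]
    exact (smul_eq_zero.mp h2).resolve_left hne
  rw [hρ0] at hρ
  simp at hρ
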